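/- If an m×n matrix M' over Σ is fair w.r.t. γ, then c̃ · dr(M') ≤ c̃ · dr(M) + d(M,M'); equivalently, the number of distinct rows of M' is at most the number of distinct rows of M plus ⌊d(M,M')/c̃⌋. -/

import Mathlib

variable {m n c : ℕ} {A : Type*} [Fintype A] [DecidableEq A]

/-- The set of distinct row types of a matrix. -/
def types (M : Fin m → Fin n → A) : Finset (Fin n → A) :=
  Finset.univ.image (fun i => M i)

/-- The number of distinct rows of a matrix. -/
def dr (M : Fin m → Fin n → A) : ℕ := (types M).card

/-- The cluster of a type `τ` in `M`: the set of rows whose type is `τ`. -/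
def cluster (M : Fin m → Fin n → A) (τ : Fin n → A) : Finset (Fin m) :=
  Finset.univ.filter (fun i => M i = τ)

/-- The edit cost between two matrices: the number of positions where they differ. -/
def editCost (M M' : Fin m → Fin n → A) : ℕ :=
  ((Finset.univ : Finset (Fin m × Fin n)).filter (fun p => M p.1 p.2 ≠ M' p.1 p.2)).card

/-- The number of occurrences of color `z` in the coloring `γ`. -/
def colorCount (γ : Fin m → Fin c) (z : Fin c) : ℕ :=
  (Finset.univ.filter (fun i => γ i = z)).card

/-- A set of rows is fair w.r.t. `γ` if it witnesses the same color distribution as `γ`. -/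
def fairSet (γ : Fin m → Fin c) (S : Finset (Fin m)) : Prop :=
  ∀ z : Fin c, m * (S.filter (fun i => γ i = z)).card = colorCount γ z * S.card

/-- A matrix is fair if the cluster of each of its types is fair. -/
def fairMatrix (γ : Fin m → Fin c) (M' : Fin m → Fin n → A) : Prop :=
  ∀ τ ∈ types M', fairSet γ (cluster M' τ)

/-- The fairlet size `c̃ = m / gcd(|γ|_1, …, |γ|_c)`. -/
def fairletSize (γ : Fin m → Fin c) : ℕ :=
  m / Finset.univ.gcd (colorCount γ)

/-- For a fair matrix `M'`, `c̃ · dr(M') ≤ c̃ · dr(M) + d(M,M')`. -/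
theorem fairletSize_mul_dr_le (hm : 0 < m) (hn : 0 < n)
    (γ : Fin m → Fin c) (hγ : Function.Surjective γ)
    (M M' : Fin m → Fin n → A) (h : fairMatrix γ M') :
    fairletSize γ * dr M' ≤ fairletSize γ * dr M + editCost M M' := by
  classical
  set g : ℕ := Finset.univ.gcd (colorCount γ) with hg
  set ct : ℕ := fairletSize γ with hct
  -- sum of color counts is m
  have hsum : ∑ z, colorCount γ z = m := by
    have := Finset.card_eq_sum_card_fiberwise
      (s := (Finset.univ : Finset (Fin m))) (t := Finset.univ) (f := γ)
      (fun x _ => Finset.mem_univ _)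
    simpa [colorCount] using this.symm
  have hgm : g ∣ m := by
    rw [← hsum]
    exact Finset.dvd_sum (fun z _ => Finset.gcd_dvd (Finset.mem_univ z))
  -- g is positive
  have hg0 : 0 < g := by
    obtain ⟨i0⟩ : Nonempty (Fin m) := ⟨⟨0, hm⟩⟩
    have hcnt : 0 < colorCount γ (γ i0) :=
      Finset.card_pos.mpr ⟨i0, by simp [colorCount]⟩
    exact Nat.pos_of_dvd_of_pos (Finset.gcd_dvd (Finset.mem_univ _)) hcnt
  have hmg : m = g * ct := by
    rw [hct, fairletSize, ← hg, Nat.mul_div_cancel' hgm]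
  -- each cluster of a type of M' has cardinality ≥ ct
  have hcl : ∀ τ ∈ types M', ct ≤ (cluster M' τ).card := by
    intro τ hτ
    obtain ⟨i, -, hi⟩ := Finset.mem_image.mp hτ
    have hmem : i ∈ cluster M' τ := by simp [cluster, hi]
    have hpos : 0 < (cluster M' τ).card := Finset.card_pos.mpr ⟨i, hmem⟩
    have hfair := h τ hτ
    have hdvd : m ∣ g * (cluster M' τ).card := by
      have hgcd : (Finset.univ.gcd (fun z => colorCount γ z * (cluster M' τ).card))
          = g * (cluster M' τ).card := by simpa using (Finset.gcd_mul_right (s := Finset.univ) (f := colorCount γ) (a := (cluster M' τ).card))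
      rw [← hgcd]
      exact Finset.dvd_gcd (fun z _ => ⟨_, (hfair z).symm⟩)
    have hctdvd : ct ∣ (cluster M' τ).card := by
      have hdvd' : g * ct ∣ g * (cluster M' τ).card := by rw [← hmg]; exact hdvd
      exact (Nat.mul_dvd_mul_iff_left hg0).mp hdvd'
    exact Nat.le_of_dvd hpos hctdvd
  -- split types of M' into good and bad
  set P : (Fin n → A) → Prop := fun τ => ∃ i ∈ cluster M' τ, M i = M' i with hP
  set G := (types M').filter P with hGdef
  set B := (types M').filter (fun τ => ¬ P τ) with hBdef
  have hGB : G.card + B.card = dr M' :=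
    Finset.card_filter_add_card_filter_not _
  have hG : G ⊆ types M := by
    intro τ hτ
    obtain ⟨hτ', i, hi, hMi⟩ := Finset.mem_filter.mp hτ
    have hclu : M' i = τ := (Finset.mem_filter.mp hi).2
    exact Finset.mem_image.mpr ⟨i, Finset.mem_univ i, hMi.trans hclu⟩
  set D := Finset.univ.filter (fun i => M i ≠ M' i) with hDdef
  -- bad types cost at least ct each
  have hD : ct * B.card ≤ D.card := by
    have hdisj : ∀ τ ∈ B, ∀ τ' ∈ B, τ ≠ τ' →
        Disjoint (cluster M' τ) (cluster M' τ') := by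
      intro τ _ τ' _ hne
      rw [Finset.disjoint_left]
      intro i hi hi'
      exact hne (((Finset.mem_filter.mp hi).2).symm.trans (Finset.mem_filter.mp hi').2)
    have hsub : B.biUnion (fun τ => cluster M' τ) ⊆ D := by
      intro i hi
      obtain ⟨τ, hτ, hiτ⟩ := Finset.mem_biUnion.mp hi
      have hnP : ¬ P τ := (Finset.mem_filter.mp hτ).2
      refine Finset.mem_filter.mpr ⟨Finset.mem_univ _, ?_⟩
      intro hMM
      exact hnP ⟨i, hiτ, hMM⟩
    calc ct * B.card = ∑ _τ ∈ B, ct := by rw [Finset.sum_const, smul_eq_mul, mul_comm]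
      _ ≤ ∑ τ ∈ B, (cluster M' τ).card :=
          Finset.sum_le_sum (fun τ hτ => hcl τ (Finset.mem_filter.mp hτ).1)
      _ = (B.biUnion (fun τ => cluster M' τ)).card := (Finset.card_biUnion hdisj).symm
      _ ≤ D.card := Finset.card_le_card hsub
  -- each changed row contributes at least one edit
  have hDE : D.card ≤ editCost M M' := by
    have hf : ∀ i ∈ D, ∃ j, M i j ≠ M' i j := by
      intro i hi
      exact Function.ne_iff.mp ((Finset.mem_filter.mp hi).2)
    refine Finset.card_le_card_of_injOn
      (fun i => (i, if hh : ∃ j, M i j ≠ M' i j then hh.choose else ⟨0, hn⟩)) ?_ ?_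
    · intro i hi
      have hh := hf i hi
      simp only [editCost, Finset.mem_filter, Finset.mem_univ, true_and]
      rw [dif_pos hh]
      exact Finset.mem_coe.mpr (Finset.mem_filter.mpr ⟨Finset.mem_univ _, hh.choose_spec⟩)
    · intro a _ b _ hab
      exact congrArg Prod.fst hab
  calc ct * dr M' = ct * G.card + ct * B.card := by rw [← hGB, mul_add]
    _ ≤ ct * dr M + editCost M M' :=
        add_le_add (Nat.mul_le_mul_left _ (Finset.card_le_card hG)) (hD.trans hDE)
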